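/- arXiv:0708.3122 — 2 statements merged into one kernel-verified Lean document; each statement's English description precedes it below -/
import Mathlib

section
/- Let β₀ ≥ 0 and Σ₀ a multiset of nonnegative reals containing 0 with multiplicity β₀, and set f(t) = Σ_{β∈Σ₀} e^(t(1−β)) (assumed convergent). Then L'₀(z) := L'(f)(z−1) extends meromorphically to ℂ with only simple poles of integer residue, satisfies L'₀(1+z) = −L'₀(1−z), and Res_{z=0} L'₀ = Res_{z=2} L'₀ = β₀. -/
open Real Set MeasureTheory Filter Topology

section LaplaceAux

variable {ι : Type}

/-- The basic exponential integral on `(0, ∞)`. -/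
lemma lapAuxExpIntegral {c : ℝ} (hc : 0 < c) :
    ∫ t in Ioi (0:ℝ), Real.exp (-c * t) = 1 / c := by
  have hderiv : ∀ x ∈ Ici (0:ℝ),
      HasDerivAt (fun t : ℝ => -Real.exp (-c * t) / c) (Real.exp (-c * x)) x := by
    intro x _
    have h1 : HasDerivAt (fun t : ℝ => -c * t) (-c) x := by
      simpa using (hasDerivAt_id x).const_mul (-c)
    have h2 := (h1.exp.neg).div_const c
    convert h2 using 1 <;> (try rfl) <;> field_simp
  have hintc : IntegrableOn (fun t : ℝ => Real.exp (-c * t)) (Ioi 0) :=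
    exp_neg_integrableOn_Ioi 0 hc
  have htend : Tendsto (fun t : ℝ => -Real.exp (-c * t) / c) atTop (𝓝 0) := by
    have h0 : Tendsto (fun t : ℝ => c * t) atTop atTop :=
      Tendsto.const_mul_atTop hc tendsto_id
    have h1 : Tendsto (fun t : ℝ => Real.exp (-(c * t))) atTop (𝓝 0) :=
      Real.tendsto_exp_neg_atTop_nhds_zero.comp h0
    have h2 := (h1.neg).div_const c
    simpa [neg_mul] using h2
  have := integral_Ioi_of_hasDerivAt_of_tendsto' hderiv hintc htend
  rw [this]
  simp
  field_simp

/-- If `exp (-c t)` is integrable on `(0, ∞)` then `0 < c`. -/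
lemma lapAuxPos {c : ℝ} (h : IntegrableOn (fun t : ℝ => Real.exp (-c * t)) (Ioi (0:ℝ))) :
    0 < c := by
  by_contra hc
  push_neg at hc
  have h1 : IntegrableOn (fun _ : ℝ => (1:ℝ)) (Ioi (0:ℝ)) := by
    refine h.mono' aestronglyMeasurable_const ?_
    filter_upwards [ae_restrict_mem measurableSet_Ioi] with t ht
    rw [norm_one]
    have h0 : 0 ≤ -c * t := mul_nonneg (neg_nonneg.2 hc) (le_of_lt ht)
    exact Real.one_le_exp h0
  rcases (integrableOn_const_iff (C := (1:ℝ))).mp h1 with h2 | h2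
  · norm_num at h2
  · rw [Real.volume_Ioi] at h2
    exact (lt_irrefl _ h2).elim

/-- Denominator of the summands of the meromorphic continuation. -/
noncomputable def lapQ (b : ι → ℝ) (i : ι) (z : ℂ) : ℂ := (z - 1)^2 + ((b i : ℂ) - 1)

/-- Summands of the meromorphic continuation. -/
noncomputable def lapG (b : ι → ℝ) (i : ι) (z : ℂ) : ℂ := 2 * (z - 1) / lapQ b i z

/-- The meromorphic continuation. -/
noncomputable def lapF (b : ι → ℝ) (z : ℂ) : ℂ := ∑' i, lapG b i z

lemma lapRes_ne (w c : ℂ) (hc : (w - 1)^2 + c ≠ 0) :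
    Tendsto (fun s : ℂ => (s - w) * (2 * (s - 1) / ((s - 1)^2 + c))) (𝓝[≠] w) (𝓝 0) := by
  have hcont : ContinuousAt (fun s : ℂ => (s - w) * (2 * (s - 1) / ((s - 1)^2 + c))) w := by
    refine ContinuousAt.mul (by fun_prop) ?_
    exact ContinuousAt.div (by fun_prop) (by fun_prop) hc
  have h := hcont.tendsto
  simp only [sub_self, zero_mul] at h
  exact h.mono_left nhdsWithin_le_nhds

lemma lapRes_one {w c : ℂ} (hroot : (w - 1)^2 + c = 0) (hw : w ≠ 1) :
    Tendsto (fun s : ℂ => (s - w) * (2 * (s - 1) / ((s - 1)^2 + c))) (𝓝[≠] w) (𝓝 1) := by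
  have hc : c = -(w - 1)^2 := by linear_combination hroot
  have hfac : ∀ s : ℂ, (s - 1)^2 + c = (s - w) * (s - (2 - w)) := by
    intro s; rw [hc]; ring
  have hw2 : w - (2 - w) ≠ 0 := by
    intro h
    exact hw (by linear_combination h / 2)
  have hval : 2 * (w - 1) / (w - (2 - w)) = 1 := by
    rw [div_eq_one_iff_eq hw2]; ring
  have hcont : Tendsto (fun s : ℂ => 2 * (s - 1) / (s - (2 - w))) (𝓝 w) (𝓝 1) := by
    have h1 : ContinuousAt (fun s : ℂ => 2 * (s - 1) / (s - (2 - w))) w :=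
      ContinuousAt.div (by fun_prop) (by fun_prop) hw2
    have h2 := h1.tendsto
    rwa [hval] at h2
  refine Tendsto.congr' ?_ (hcont.mono_left nhdsWithin_le_nhds)
  filter_upwards [self_mem_nhdsWithin] with s hs
  have hsw : s - w ≠ 0 := sub_ne_zero.2 hs
  rw [hfac s]
  rcases eq_or_ne (s - (2 - w)) 0 with h | h
  · rw [h]; simp
  · field_simp

lemma lapRes_two {c : ℂ} (hroot : ((1:ℂ) - 1)^2 + c = 0) :
    Tendsto (fun s : ℂ => (s - 1) * (2 * (s - 1) / ((s - 1)^2 + c))) (𝓝[≠] (1:ℂ)) (𝓝 2) := by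
  have hc : c = 0 := by linear_combination hroot
  subst hc
  refine Tendsto.congr' ?_ (tendsto_const_nhds (x := (2:ℂ)))
  filter_upwards [self_mem_nhdsWithin] with s hs
  have h : s - 1 ≠ 0 := sub_ne_zero.2 hs
  rw [add_zero]
  field_simp

/-- Local decomposition of `lapF` into a finite (possibly polar) part and an analytic tail. -/
lemma lapDecomp (b : ι → ℝ) (A : ℝ) (hA : 0 ≤ A)
    (hμ0 : ∀ i, 0 < b i - 1 + A) (hμsum : Summable fun i => 1 / (b i - 1 + A))
    (hfin : ∀ C : ℝ, {i | b i ≤ C}.Finite) (p : ℂ) :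
    ∃ T : Finset ι,
      (∀ i, b i ≤ 1 → i ∈ T) ∧
      (∀ i, i ∉ T → ∀ z ∈ Metric.ball p 1, lapQ b i z ≠ 0) ∧
      (∀ z ∈ Metric.ball p 1, Summable fun i => lapG b i z) ∧
      DifferentiableOn ℂ (fun z => ∑' j : {i // i ∉ T}, lapG b (j : ι) z) (Metric.ball p 1) ∧
      (∀ z ∈ Metric.ball p 1,
        lapF b z = (∑ i ∈ T, lapG b i z) + ∑' j : {i // i ∉ T}, lapG b (j : ι) z) := by
  classical
  set K : ℝ := ‖p‖ + 2 with hKdef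
  have hK0 : 0 < K := by positivity
  refine ⟨(hfin (1 + 2 * K^2 + A)).toFinset, ?_, ?_, ?_, ?_, ?_⟩
  case _ =>
    intro i hi
    rw [Set.Finite.mem_toFinset]
    have : (0:ℝ) ≤ 2 * K^2 + A := by positivity
    simp only [mem_setOf_eq]
    linarith
  all_goals
    have hzK : ∀ z ∈ Metric.ball p 1, ‖z - 1‖ ≤ K := by
      intro z hz
      have h1 : ‖z - p‖ < 1 := by
        rw [← dist_eq_norm]; exact Metric.mem_ball.mp hz
      calc ‖z - 1‖ = ‖(z - p) + (p - 1)‖ := by ring_nf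
        _ ≤ ‖z - p‖ + ‖p - 1‖ := norm_add_le _ _
        _ ≤ ‖z - p‖ + (‖p‖ + ‖(1:ℂ)‖) := by linarith [norm_sub_le p (1:ℂ)]
        _ ≤ K := by simp only [norm_one]; rw [hKdef]; linarith
    have hlow : ∀ i, i ∉ (hfin (1 + 2 * K^2 + A)).toFinset →
        ∀ z ∈ Metric.ball p 1, (b i - 1 + A) / 2 ≤ ‖lapQ b i z‖ := by
      intro i hi z hz
      rw [Set.Finite.mem_toFinset, mem_setOf_eq, not_le] at hi
      have h1 : ‖(z - 1)^2‖ ≤ K^2 := by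
        rw [norm_pow]
        exact pow_le_pow_left₀ (norm_nonneg _) (hzK z hz) 2
      have h2 : ‖((b i : ℂ) - 1)‖ = b i - 1 := by
        rw [show ((b i : ℂ) - 1) = ((b i - 1 : ℝ) : ℂ) by push_cast; ring]
        rw [Complex.norm_real]
        exact abs_of_nonneg (by nlinarith)
      have h3 : ‖((b i : ℂ) - 1)‖ - ‖(z - 1)^2‖ ≤ ‖lapQ b i z‖ := by
        have h4 := norm_sub_norm_le ((b i : ℂ) - 1) (-((z - 1)^2))
        have h5 : ((b i : ℂ) - 1) - -((z - 1)^2) = lapQ b i z := by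
          rw [lapQ]; ring
        rw [h5, norm_neg] at h4
        exact h4
      rw [h2] at h3
      nlinarith
  case _ =>
    intro i hi z hz
    have h := hlow i hi z hz
    have h0 := hμ0 i
    intro hcontra
    rw [hcontra, norm_zero] at h
    linarith
  all_goals
    have hbound : ∀ i, i ∉ (hfin (1 + 2 * K^2 + A)).toFinset →
        ∀ z ∈ Metric.ball p 1, ‖lapG b i z‖ ≤ 4 * K * (1 / (b i - 1 + A)) := by
      intro i hi z hz
      have h1 := hlow i hi z hz
      have h0 := hμ0 i
      rw [lapG, norm_div]
      have h2 : ‖2 * (z - 1)‖ ≤ 2 * K := by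
        rw [norm_mul]
        have := hzK z hz
        simp only [Complex.norm_ofNat]
        nlinarith [norm_nonneg (z - 1)]
      have h3 : (0:ℝ) < (b i - 1 + A) / 2 := by linarith
      calc ‖2 * (z - 1)‖ / ‖lapQ b i z‖ ≤ (2 * K) / ((b i - 1 + A) / 2) :=
            div_le_div₀ (by positivity) h2 h3 h1
        _ = 4 * K * (1 / (b i - 1 + A)) := by field_simp; ring
    have hsummable : ∀ z ∈ Metric.ball p 1, Summable fun i => lapG b i z := by
      intro z hz
      rw [← Finset.summable_compl_iff (hfin (1 + 2 * K^2 + A)).toFinset]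
      refine Summable.of_norm_bounded
        (g := fun j : {i // i ∉ (hfin (1 + 2 * K^2 + A)).toFinset} => 4 * K * (1 / (b (j:ι) - 1 + A)))
        ((hμsum.mul_left (4 * K)).subtype _) ?_
      intro j
      exact hbound (j : ι) j.2 z hz
  case _ => exact hsummable
  case _ =>
    refine Complex.differentiableOn_tsum_of_summable_norm
      (u := fun j : {i // i ∉ (hfin (1 + 2 * K^2 + A)).toFinset} => 4 * K * (1 / (b (j:ι) - 1 + A)))
      ((hμsum.mul_left (4 * K)).subtype _) ?_ Metric.isOpen_ball ?_
    · intro j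
      refine DifferentiableOn.div ?_ ?_ ?_
      · exact (((differentiable_id.sub_const (1:ℂ)).const_mul (2:ℂ))).differentiableOn
      · exact ((((differentiable_id.sub_const (1:ℂ)).pow 2).add_const _)).differentiableOn
      · intro z hz
        have h1 := hlow (j : ι) j.2 z hz
        have h0 := hμ0 (j : ι)
        intro hcontra
        rw [hcontra, norm_zero] at h1
        linarith
    · intro j z hz
      exact hbound (j : ι) j.2 z hz
  case _ =>
    intro z hz
    rw [lapF]
    exact ((hsummable z hz).sum_add_tsum_subtype_compl _).symm

end LaplaceAux

/-- Let `β₀ ≥ 0` and `Σ₀` a multiset of nonnegative reals (encoded by a countable family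
`b : ι → ℝ`) containing `0` with multiplicity `β₀`, and `f(t) = Σ_{β∈Σ₀} e^(t(1−β))`
(assumed convergent, with `L'(f)(z−1)` convergent for real `z ≥ Z`).  Then
`L'₀(z) = L'(f)(z−1)` extends to a meromorphic function `F` on `ℂ` with only simple
poles of integer residue, satisfying `F(1+z) = −F(1−z)`, and
`Res_{z=0} F = Res_{z=2} F = β₀`. -/
theorem laplace_deriv_heat_trace_shifted_meromorphic
    {ι : Type} [Countable ι] (b : ι → ℝ) (hb : ∀ i, 0 ≤ b i)
    (β₀ : ℕ) (hβ₀ : Nat.card {i // b i = 0} = β₀)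
    (f : ℝ → ℝ)
    (hf : ∀ t : ℝ, 0 < t →
      Summable (fun i => Real.exp (t * (1 - b i))) ∧
      f t = ∑' i, Real.exp (t * (1 - b i)))
    (Z : ℝ)
    (hint : ∀ z : ℝ, Z ≤ z →
      IntegrableOn (fun t => Real.exp (-t * (z - 1) ^ 2) * f t) (Ioi 0)) :
    ∃ F : ℂ → ℂ, MeromorphicOn F Set.univ ∧
      (∀ z : ℝ, Z ≤ z →
        F z = 2 * (z - 1) * ∫ t in Ioi (0 : ℝ), Real.exp (-t * (z - 1) ^ 2) * f t) ∧
      (∀ w : ℂ, ∃ n : ℤ,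
        Tendsto (fun s => (s - w) * F s) (𝓝[≠] w) (𝓝 (n : ℂ))) ∧
      (∀ s : ℂ, F (1 + s) = -F (1 - s)) ∧
      Tendsto (fun s => s * F s) (𝓝[≠] (0 : ℂ)) (𝓝 (β₀ : ℂ)) ∧
      Tendsto (fun s => (s - 2) * F s) (𝓝[≠] (2 : ℂ)) (𝓝 (β₀ : ℂ)) := by
  classical
  -- finiteness of sublevel sets of `b`
  have hsum1 : Summable (fun i => Real.exp (1 * (1 - b i))) := (hf 1 one_pos).1
  have hfin : ∀ C : ℝ, {i | b i ≤ C}.Finite := by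
    intro C
    have h0 : ∀ᶠ i in cofinite, Real.exp (1 * (1 - b i)) < Real.exp (1 - C) :=
      hsum1.tendsto_cofinite_zero.eventually_lt_const (Real.exp_pos (1 - C))
    rw [eventually_cofinite] at h0
    refine h0.subset ?_
    intro i hi
    simp only [mem_setOf_eq] at hi ⊢
    refine not_lt.2 (Real.exp_le_exp.2 ?_)
    linarith
  -- positivity of the denominators for `z ≥ Z`
  have hpos : ∀ z : ℝ, Z ≤ z → ∀ i, 0 < (z - 1)^2 + (b i - 1) := by
    intro z hz i
    refine lapAuxPos (c := (z - 1)^2 + (b i - 1)) ?_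
    refine (hint z hz).mono' ?_ ?_
    · exact (Real.continuous_exp.comp (by continuity)).aestronglyMeasurable
    · filter_upwards [ae_restrict_mem measurableSet_Ioi] with t ht
      obtain ⟨hS, hfe⟩ := hf t ht
      have hterm : Real.exp (t * (1 - b i)) ≤ f t := by
        rw [hfe]
        exact hS.le_tsum i (fun j _ => (Real.exp_pos _).le)
      have h1 : Real.exp (-((z - 1)^2 + (b i - 1)) * t)
          = Real.exp (-t * (z - 1)^2) * Real.exp (t * (1 - b i)) := by
        rw [← Real.exp_add]; congr 1; ring
      rw [Real.norm_eq_abs, abs_of_pos (Real.exp_pos _), h1]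
      exact mul_le_mul_of_nonneg_left hterm (Real.exp_pos _).le
  -- the integral computation and summability, for every `z ≥ Z`
  have key : ∀ z : ℝ, Z ≤ z →
      Summable (fun i => 1 / ((z - 1)^2 + (b i - 1))) ∧
      (∫ t in Ioi (0:ℝ), Real.exp (-t * (z - 1)^2) * f t)
        = ∑' i, 1 / ((z - 1)^2 + (b i - 1)) := by
    intro z hz
    have hν0 : ∀ i, 0 < (z - 1)^2 + (b i - 1) := hpos z hz
    have hInt := hint z hz
    have hnn : 0 ≤ᵐ[volume.restrict (Ioi (0:ℝ))]
        fun t => Real.exp (-t * (z - 1)^2) * f t := by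
      filter_upwards [ae_restrict_mem measurableSet_Ioi] with t ht
      have hfe := (hf t ht).2
      refine mul_nonneg (Real.exp_pos _).le ?_
      rw [hfe]
      exact tsum_nonneg fun j => (Real.exp_pos _).le
    have h1 : ENNReal.ofReal (∫ t in Ioi (0:ℝ), Real.exp (-t * (z - 1)^2) * f t)
        = ∫⁻ t in Ioi (0:ℝ), ENNReal.ofReal (Real.exp (-t * (z - 1)^2) * f t) :=
      ofReal_integral_eq_lintegral_ofReal hInt hnn
    have h2 : (∫⁻ t in Ioi (0:ℝ), ENNReal.ofReal (Real.exp (-t * (z - 1)^2) * f t))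
        = ∫⁻ t in Ioi (0:ℝ), ∑' i, ENNReal.ofReal (Real.exp (-((z-1)^2 + (b i - 1)) * t)) := by
      refine setLIntegral_congr_fun measurableSet_Ioi ?_
      intro t ht
      obtain ⟨hS, hfe⟩ := hf t ht
      beta_reduce
      rw [hfe, ← tsum_mul_left,
        ENNReal.ofReal_tsum_of_nonneg
          (fun i => mul_nonneg (Real.exp_pos _).le (Real.exp_pos _).le) (hS.mul_left _)]
      refine tsum_congr fun i => ?_
      congr 1
      rw [← Real.exp_add]; congr 1; ring
    have h3 : (∫⁻ t in Ioi (0:ℝ), ∑' i, ENNReal.ofReal (Real.exp (-((z-1)^2 + (b i - 1)) * t)))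
        = ∑' i, ∫⁻ t in Ioi (0:ℝ), ENNReal.ofReal (Real.exp (-((z-1)^2 + (b i - 1)) * t)) :=
      lintegral_tsum fun i =>
        ((Real.measurable_exp.comp (measurable_id.const_mul _)).ennreal_ofReal).aemeasurable
    have h4 : ∀ i, (∫⁻ t in Ioi (0:ℝ), ENNReal.ofReal (Real.exp (-((z-1)^2 + (b i - 1)) * t)))
        = ENNReal.ofReal (1 / ((z-1)^2 + (b i - 1))) := by
      intro i
      rw [← ofReal_integral_eq_lintegral_ofReal (exp_neg_integrableOn_Ioi 0 (hν0 i))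
        (ae_of_all _ fun t => (Real.exp_pos _).le), lapAuxExpIntegral (hν0 i)]
    have hmain : ENNReal.ofReal (∫ t in Ioi (0:ℝ), Real.exp (-t * (z - 1)^2) * f t)
        = ∑' i, ENNReal.ofReal (1 / ((z-1)^2 + (b i - 1))) := by
      rw [h1, h2, h3]; exact tsum_congr h4
    have hne : (∑' i, ENNReal.ofReal (1 / ((z-1)^2 + (b i - 1)))) ≠ ⊤ := by
      rw [← hmain]; exact ENNReal.ofReal_ne_top
    have hsumν : Summable (fun i => 1 / ((z-1)^2 + (b i - 1))) := by
      have h5 : ∀ i, ENNReal.ofReal (1 / ((z-1)^2 + (b i - 1)))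
          = ((Real.toNNReal (1 / ((z-1)^2 + (b i - 1))) : NNReal) : ENNReal) := fun i => rfl
      simp only [h5] at hne
      have h6 := NNReal.summable_coe.mpr (ENNReal.tsum_coe_ne_top_iff_summable.mp hne)
      refine h6.congr fun i => ?_
      exact Real.coe_toNNReal _ (one_div_nonneg.mpr (hν0 i).le)
    refine ⟨hsumν, ?_⟩
    have hI0 : 0 ≤ ∫ t in Ioi (0:ℝ), Real.exp (-t * (z - 1)^2) * f t :=
      integral_nonneg_of_ae hnn
    have h7 := hmain.trans
      (ENNReal.ofReal_tsum_of_nonneg (fun i => one_div_nonneg.mpr (hν0 i).le) hsumν).symm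
    exact (ENNReal.ofReal_eq_ofReal_iff hI0 (tsum_nonneg fun i => one_div_nonneg.mpr (hν0 i).le)).mp h7
  -- the constants used in the decomposition
  set z₀ : ℝ := max Z 2 with hz₀def
  have hz₀Z : Z ≤ z₀ := le_max_left _ _
  have hA0 : (0:ℝ) ≤ (z₀ - 1)^2 := sq_nonneg _
  have hμ0 : ∀ i, 0 < b i - 1 + (z₀ - 1)^2 := by
    intro i; have := hpos z₀ hz₀Z i; linarith
  have hμsum : Summable (fun i => 1 / (b i - 1 + (z₀ - 1)^2)) := by
    refine ((key z₀ hz₀Z).1).congr fun i => ?_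
    congr 1; ring
  -- general residue computation
  have hres : ∀ w : ℂ, ∃ T : Finset ι, (∀ i, b i ≤ 1 → i ∈ T) ∧
      Tendsto (fun s => (s - w) * lapF b s) (𝓝[≠] w)
        (𝓝 ((∑ i ∈ T, if lapQ b i w = 0 then (if w = 1 then 2 else 1) else 0 : ℕ) : ℂ)) := by
    intro w
    obtain ⟨T, hT1, hTne, hTsum, hTdiff, hTdec⟩ :=
      lapDecomp b ((z₀ - 1)^2) hA0 hμ0 hμsum hfin w
    refine ⟨T, hT1, ?_⟩
    have hball : Metric.ball w 1 ∈ 𝓝 w := Metric.ball_mem_nhds w one_pos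
    have hev : (fun s : ℂ => (∑ i ∈ T, (s - w) * lapG b i s)
          + (s - w) * ∑' j : {i // i ∉ T}, lapG b (j:ι) s)
        =ᶠ[𝓝[≠] w] (fun s => (s - w) * lapF b s) := by
      filter_upwards [mem_nhdsWithin_of_mem_nhds hball] with s hs
      rw [hTdec s hs, mul_add, Finset.mul_sum]
    refine Tendsto.congr' hev ?_
    have htail : Tendsto (fun s : ℂ => (s - w) * ∑' j : {i // i ∉ T}, lapG b (j:ι) s)
        (𝓝[≠] w) (𝓝 0) := by
      have hc : ContinuousAt (fun s : ℂ => ∑' j : {i // i ∉ T}, lapG b (j:ι) s) w :=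
        (hTdiff.differentiableAt hball).continuousAt
      have h1 : Tendsto (fun s : ℂ => (s - w) * ∑' j : {i // i ∉ T}, lapG b (j:ι) s)
          (𝓝 w) (𝓝 ((w - w) * ∑' j : {i // i ∉ T}, lapG b (j:ι) w)) :=
        ((continuous_id.sub continuous_const).tendsto w).mul hc.tendsto
      have h2 := h1.mono_left (nhdsWithin_le_nhds (s := {w}ᶜ))
      simpa using h2
    have hterm : ∀ i ∈ T, Tendsto (fun s : ℂ => (s - w) * lapG b i s) (𝓝[≠] w)
        (𝓝 (((if lapQ b i w = 0 then (if w = (1:ℂ) then (2:ℕ) else 1) else 0) : ℕ) : ℂ)) := by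
      intro i _
      by_cases hq : lapQ b i w = 0
      · by_cases hw : w = (1:ℂ)
        · subst hw
          rw [if_pos hq, if_pos rfl]
          have h := lapRes_two (c := ((b i : ℂ) - 1)) (by rw [lapQ] at hq; exact hq)
          simpa [lapG, lapQ] using h
        · rw [if_pos hq, if_neg hw]
          have h := lapRes_one (w := w) (c := ((b i : ℂ) - 1)) (by rw [lapQ] at hq; exact hq) hw
          simpa [lapG, lapQ] using h
      · rw [if_neg hq]
        have h := lapRes_ne w ((b i : ℂ) - 1) (by rw [lapQ] at hq; exact hq)
        simpa [lapG, lapQ] using h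
    have hsumlim := tendsto_finset_sum T hterm
    have hfinal := hsumlim.add htail
    simpa [Nat.cast_sum] using hfinal
  -- meromorphy
  have hmero : MeromorphicOn (lapF b) Set.univ := by
    intro x _
    obtain ⟨T, hT1, hTne, hTsum, hTdiff, hTdec⟩ :=
      lapDecomp b ((z₀ - 1)^2) hA0 hμ0 hμsum hfin x
    have hball : Metric.ball x 1 ∈ 𝓝 x := Metric.ball_mem_nhds x one_pos
    have hGm : ∀ i : ι, MeromorphicAt (fun z => lapG b i z) x := by
      intro i
      have h1 : MeromorphicAt (fun z : ℂ => 2 * (z - 1)) x :=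
        (analyticAt_const.mul (analyticAt_id.sub analyticAt_const)).meromorphicAt
      have h2 : MeromorphicAt (fun z : ℂ => (z - 1)^2 + ((b i : ℂ) - 1)) x :=
        (((analyticAt_id.sub analyticAt_const).pow 2).add analyticAt_const).meromorphicAt
      exact h1.div h2
    have hsumm : ∀ s : Finset ι, MeromorphicAt (fun z => ∑ i ∈ s, lapG b i z) x := by
      intro s
      induction s using Finset.cons_induction with
      | empty => simpa using MeromorphicAt.const (0:ℂ) x
      | cons a s ha ih =>
        simp only [Finset.sum_cons]
        exact (hGm a).add ih
    have htailm : MeromorphicAt (fun z => ∑' j : {i // i ∉ T}, lapG b (j:ι) z) x :=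
      (hTdiff.analyticAt hball).meromorphicAt
    have hrhs : MeromorphicAt (fun z => (∑ i ∈ T, lapG b i z)
        + ∑' j : {i // i ∉ T}, lapG b (j:ι) z) x := (hsumm T).add htailm
    refine hrhs.congr ?_
    filter_upwards [mem_nhdsWithin_of_mem_nhds hball] with z hz
    exact (hTdec z hz).symm
  -- functional equation
  have hfun : ∀ s : ℂ, lapF b (1 + s) = -lapF b (1 - s) := by
    intro s
    have h1 : ∀ i, lapG b i (1 - s) = -lapG b i (1 + s) := by
      intro i
      rw [lapG, lapG, lapQ, lapQ]
      have e1 : (1 - s - 1 : ℂ) = -s := by ring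
      have e2 : (1 + s - 1 : ℂ) = s := by ring
      rw [e1, e2, show ((-s:ℂ))^2 = s^2 by ring, show (2:ℂ) * -s = -(2*s) by ring, neg_div]
    have h2 : lapF b (1 - s) = -lapF b (1 + s) := by
      rw [lapF, lapF, ← tsum_neg]
      exact tsum_congr h1
    rw [h2, neg_neg]
  -- residues at 0 and 2
  have hfin0 : {i | b i = 0}.Finite := (hfin 0).subset (fun i hi => le_of_eq hi)
  have hcard : hfin0.toFinset.card = β₀ := by
    rw [← hβ₀]
    exact (Nat.card_eq_card_finite_toFinset hfin0).symm
  have hres0 : Tendsto (fun s : ℂ => s * lapF b s) (𝓝[≠] (0:ℂ)) (𝓝 (β₀ : ℂ)) := by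
    obtain ⟨T, hT1, hlim⟩ := hres 0
    have hQ0 : ∀ i, (lapQ b i 0 = 0) ↔ b i = 0 := by
      intro i
      rw [lapQ, show ((0:ℂ) - 1)^2 + ((b i : ℂ) - 1) = ((b i : ℝ) : ℂ) by push_cast; ring,
        Complex.ofReal_eq_zero]
    have hn : (∑ i ∈ T, if lapQ b i 0 = 0 then (if (0:ℂ) = 1 then 2 else 1) else 0 : ℕ) = β₀ := by
      have h01 : ¬ ((0:ℂ) = 1) := by norm_num
      calc (∑ i ∈ T, if lapQ b i 0 = 0 then (if (0:ℂ) = 1 then 2 else 1) else 0 : ℕ)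
          = ∑ i ∈ T, if b i = 0 then 1 else 0 := by
            refine Finset.sum_congr rfl fun i _ => ?_
            simp [hQ0 i, h01]
        _ = (T.filter (fun i => b i = 0)).card := by simp [Finset.sum_boole]
        _ = β₀ := by
            rw [← hcard]
            congr 1
            ext i
            simp only [Finset.mem_filter, Set.Finite.mem_toFinset, mem_setOf_eq]
            exact ⟨fun h => h.2, fun h => ⟨hT1 i (by rw [h]; norm_num), h⟩⟩
    rw [hn] at hlim
    simpa using hlim
  have hres2 : Tendsto (fun s : ℂ => (s - 2) * lapF b s) (𝓝[≠] (2:ℂ)) (𝓝 (β₀ : ℂ)) := by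
    obtain ⟨T, hT1, hlim⟩ := hres 2
    have hQ2 : ∀ i, (lapQ b i 2 = 0) ↔ b i = 0 := by
      intro i
      rw [lapQ, show ((2:ℂ) - 1)^2 + ((b i : ℂ) - 1) = ((b i : ℝ) : ℂ) by push_cast; ring,
        Complex.ofReal_eq_zero]
    have hn : (∑ i ∈ T, if lapQ b i 2 = 0 then (if (2:ℂ) = 1 then 2 else 1) else 0 : ℕ) = β₀ := by
      have h21 : ¬ ((2:ℂ) = 1) := by norm_num
      calc (∑ i ∈ T, if lapQ b i 2 = 0 then (if (2:ℂ) = 1 then 2 else 1) else 0 : ℕ)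
          = ∑ i ∈ T, if b i = 0 then 1 else 0 := by
            refine Finset.sum_congr rfl fun i _ => ?_
            simp [hQ2 i, h21]
        _ = (T.filter (fun i => b i = 0)).card := by simp [Finset.sum_boole]
        _ = β₀ := by
            rw [← hcard]
            congr 1
            ext i
            simp only [Finset.mem_filter, Set.Finite.mem_toFinset, mem_setOf_eq]
            exact ⟨fun h => h.2, fun h => ⟨hT1 i (by rw [h]; norm_num), h⟩⟩
    rw [hn] at hlim
    exact hlim
  -- integer residues everywhere
  have hresZ : ∀ w : ℂ, ∃ n : ℤ,
      Tendsto (fun s => (s - w) * lapF b s) (𝓝[≠] w) (𝓝 (n : ℂ)) := by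
    intro w
    obtain ⟨T, _, hlim⟩ := hres w
    refine ⟨((∑ i ∈ T, if lapQ b i w = 0 then (if w = 1 then 2 else 1) else 0 : ℕ) : ℤ), ?_⟩
    have hcast : ((((∑ i ∈ T, if lapQ b i w = 0 then (if w = 1 then 2 else 1) else 0 : ℕ) : ℤ)) : ℂ)
        = ((∑ i ∈ T, if lapQ b i w = 0 then (if w = 1 then 2 else 1) else 0 : ℕ) : ℂ) := by
      push_cast; ring
    rw [hcast]
    exact hlim
  refine ⟨lapF b, hmero, ?_, hresZ, hfun, hres0, hres2⟩
  -- the value for real `z ≥ Z`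
  intro z hz
  obtain ⟨hsummable, hI⟩ := key z hz
  have hterm : ∀ i, lapG b i (z:ℂ) = ((2 * (z - 1) / ((z - 1)^2 + (b i - 1)) : ℝ) : ℂ) := by
    intro i
    rw [lapG, lapQ]
    push_cast
    ring
  have hreal : (∑' i, (2 * (z - 1) / ((z - 1)^2 + (b i - 1)) : ℝ))
      = 2 * (z - 1) * ∫ t in Ioi (0:ℝ), Real.exp (-t * (z - 1)^2) * f t := by
    rw [hI, ← tsum_mul_left]
    exact tsum_congr fun i => by rw [mul_one_div]
  have hstep : lapF b (z:ℂ)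
      = (((2 * (z - 1) * ∫ t in Ioi (0:ℝ), Real.exp (-t * (z - 1)^2) * f t : ℝ)) : ℂ) := by
    rw [lapF]
    calc (∑' i, lapG b i (z:ℂ))
        = ∑' i, ((2 * (z - 1) / ((z - 1)^2 + (b i - 1)) : ℝ) : ℂ) := tsum_congr hterm
      _ = (((∑' i, (2 * (z - 1) / ((z - 1)^2 + (b i - 1)) : ℝ)) : ℝ) : ℂ) :=
          (Complex.ofReal_tsum _).symm
      _ = _ := by rw [hreal]
  rw [hstep]
  push_cast
  ring
end

section
/- For positive reals z and α, 2z ∫₀^∞ dt e^(−t z²) ∫ℝ e^(−tλ²)/(α + iλ) dλ = 2π/(z + α), and the same with (α − iλ) in the denominator. -/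
open Real Set MeasureTheory Filter

/-! ### Auxiliary real integrals -/

lemma aux_integrable_inv_sq_add {c : ℝ} (hc : 0 < c) :
    Integrable fun x : ℝ => (x ^ 2 + c ^ 2)⁻¹ := by
  have h : (fun x : ℝ => (x ^ 2 + c ^ 2)⁻¹)
      = fun x : ℝ => c⁻¹ ^ 2 * (1 + (c⁻¹ * x) ^ 2)⁻¹ := by
    funext x; field_simp; ring
  rw [h]
  exact ((integrable_inv_one_add_sq.comp_mul_left' (by positivity : (c:ℝ)⁻¹ ≠ 0)).const_mul _)

lemma aux_integral_inv_sq_add {c : ℝ} (hc : 0 < c) :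
    ∫ x : ℝ, (x ^ 2 + c ^ 2)⁻¹ = π / c := by
  have h : (fun x : ℝ => (x ^ 2 + c ^ 2)⁻¹)
      = fun x : ℝ => c⁻¹ ^ 2 * (1 + (c⁻¹ * x) ^ 2)⁻¹ := by
    funext x; field_simp; ring
  rw [h, MeasureTheory.integral_const_mul]
  rw [MeasureTheory.Measure.integral_comp_mul_left (fun y : ℝ => (1 + y ^ 2)⁻¹) c⁻¹]
  rw [integral_univ_inv_one_add_sq]
  rw [abs_of_pos (by positivity), smul_eq_mul]
  field_simp

lemma aux_cont_g {z α : ℝ} (hz : 0 < z) (hα : 0 < α) :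
    Continuous fun x : ℝ => ((x ^ 2 + z ^ 2) * (x ^ 2 + α ^ 2))⁻¹ := by
  apply Continuous.inv₀ (by continuity)
  intro x
  positivity

lemma aux_integrable_g {z α : ℝ} (hz : 0 < z) (hα : 0 < α) :
    Integrable fun x : ℝ => ((x ^ 2 + z ^ 2) * (x ^ 2 + α ^ 2))⁻¹ := by
  apply Integrable.mono' ((aux_integrable_inv_sq_add hz).const_mul (α ^ 2)⁻¹)
    (aux_cont_g hz hα).aestronglyMeasurable
  filter_upwards with x
  rw [Real.norm_eq_abs, abs_of_pos (by positivity), ← mul_inv]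
  exact inv_anti₀ (by positivity) (by nlinarith [sq_nonneg x])

lemma aux_integrable_xg {z α : ℝ} (hz : 0 < z) (hα : 0 < α) :
    Integrable fun x : ℝ => x * ((x ^ 2 + z ^ 2) * (x ^ 2 + α ^ 2))⁻¹ := by
  apply Integrable.mono' ((aux_integrable_inv_sq_add hz).const_mul (2 * α)⁻¹)
    (by exact (continuous_id.mul (aux_cont_g hz hα)).aestronglyMeasurable)
  filter_upwards with x
  have hA : (0:ℝ) < x ^ 2 + z ^ 2 := by positivity
  have hB : (0:ℝ) < x ^ 2 + α ^ 2 := by positivity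
  rw [Real.norm_eq_abs, abs_mul, abs_of_pos (by positivity : (0:ℝ) < ((x ^ 2 + z ^ 2) * (x ^ 2 + α ^ 2))⁻¹),
    ← mul_inv, ← div_eq_mul_inv, inv_eq_one_div, div_le_div_iff₀ (by positivity) (by positivity)]
  nlinarith [mul_nonneg hA.le (sq_nonneg (|x| - α)), sq_abs x, abs_nonneg x]

/-! ### The key real integral `∫ ((x²+z²)(x²+α²))⁻¹ = π/(zα(z+α))` -/

lemma aux_hasDeriv {z : ℝ} (hz : 0 < z) (x : ℝ) :
    HasDerivAt (fun x : ℝ => (2 * z ^ 2)⁻¹ * (x / (x ^ 2 + z ^ 2)) + (2 * z ^ 3)⁻¹ * arctan (x / z))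
      (((x ^ 2 + z ^ 2) * (x ^ 2 + z ^ 2))⁻¹) x := by
  have hA : (0:ℝ) < x ^ 2 + z ^ 2 := by positivity
  have hp : HasDerivAt (fun x : ℝ => x ^ 2 + z ^ 2) (2 * x) x := by
    simpa using (hasDerivAt_pow 2 x).add_const (z ^ 2)
  have h1 : HasDerivAt (fun x : ℝ => x / (x ^ 2 + z ^ 2))
      ((1 * (x ^ 2 + z ^ 2) - x * (2 * x)) / (x ^ 2 + z ^ 2) ^ 2) x :=
    (hasDerivAt_id x).div hp hA.ne'
  have h2 : HasDerivAt (fun x : ℝ => arctan (x / z)) ((1 + (x / z) ^ 2)⁻¹ * (1 / z)) x := by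
    simpa [Function.comp_def] using (Real.hasDerivAt_arctan (x / z)).comp x ((hasDerivAt_id x).div_const z)
  have h := (h1.const_mul ((2 * z ^ 2)⁻¹)).add (h2.const_mul ((2 * z ^ 3)⁻¹))
  convert h using 1 <;> try rfl
  have hz' : z ≠ 0 := hz.ne'
  field_simp
  ring

lemma aux_tendsto_ratio_top {z : ℝ} (hz : 0 < z) :
    Tendsto (fun x : ℝ => x / (x ^ 2 + z ^ 2)) atTop (nhds 0) := by
  apply squeeze_zero' (g := fun x : ℝ => 1 / x)
  · filter_upwards [eventually_gt_atTop 0] with x hx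
    positivity
  · filter_upwards [eventually_gt_atTop 0] with x hx
    rw [div_le_div_iff₀ (by positivity) hx]
    nlinarith [sq_nonneg z]
  · simpa [one_div] using tendsto_inv_atTop_zero

lemma aux_tendsto_ratio_bot {z : ℝ} (hz : 0 < z) :
    Tendsto (fun x : ℝ => x / (x ^ 2 + z ^ 2)) atBot (nhds 0) := by
  have h := (aux_tendsto_ratio_top hz).comp tendsto_neg_atBot_atTop
  have : (fun x : ℝ => (-x) / ((-x) ^ 2 + z ^ 2)) = fun x : ℝ => -(x / (x ^ 2 + z ^ 2)) := by
    funext x; ring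
  rw [Function.comp_def] at h
  simp only [this] at h
  simpa using h.neg

lemma aux_integral_sq {z : ℝ} (hz : 0 < z) :
    ∫ x : ℝ, ((x ^ 2 + z ^ 2) * (x ^ 2 + z ^ 2))⁻¹ = π / (2 * z ^ 3) := by
  have htop : Tendsto (fun x : ℝ => (2 * z ^ 2)⁻¹ * (x / (x ^ 2 + z ^ 2)) + (2 * z ^ 3)⁻¹ * arctan (x / z))
      atTop (nhds ((2 * z ^ 2)⁻¹ * 0 + (2 * z ^ 3)⁻¹ * (π / 2))) := by
    apply Tendsto.add (Tendsto.const_mul _ (aux_tendsto_ratio_top hz))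
    apply Tendsto.const_mul
    exact (Real.tendsto_arctan_atTop.mono_right nhdsWithin_le_nhds).comp
      (tendsto_id.atTop_div_const hz)
  have hbot : Tendsto (fun x : ℝ => (2 * z ^ 2)⁻¹ * (x / (x ^ 2 + z ^ 2)) + (2 * z ^ 3)⁻¹ * arctan (x / z))
      atBot (nhds ((2 * z ^ 2)⁻¹ * 0 + (2 * z ^ 3)⁻¹ * (-(π / 2)))) := by
    apply Tendsto.add (Tendsto.const_mul _ (aux_tendsto_ratio_bot hz))
    apply Tendsto.const_mul
    exact (Real.tendsto_arctan_atBot.mono_right nhdsWithin_le_nhds).comp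
      (tendsto_id.atBot_div_const hz)
  have := MeasureTheory.integral_of_hasDerivAt_of_tendsto (aux_hasDeriv hz)
    (aux_integrable_g hz hz) hbot htop
  rw [this]
  ring

lemma aux_integral_prod {z α : ℝ} (hz : 0 < z) (hα : 0 < α) :
    ∫ x : ℝ, ((x ^ 2 + z ^ 2) * (x ^ 2 + α ^ 2))⁻¹ = π / (z * α * (z + α)) := by
  rcases eq_or_ne α z with h | h
  · subst h
    rw [aux_integral_sq hα]
    ring_nf
  · have hsq : α ^ 2 - z ^ 2 ≠ 0 := by
      intro hc
      apply h
      nlinarith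
    have heq : (fun x : ℝ => ((x ^ 2 + z ^ 2) * (x ^ 2 + α ^ 2))⁻¹)
        = fun x : ℝ => (α ^ 2 - z ^ 2)⁻¹ * ((x ^ 2 + z ^ 2)⁻¹ - (x ^ 2 + α ^ 2)⁻¹) := by
      funext x
      have hA : (x:ℝ) ^ 2 + z ^ 2 ≠ 0 := by positivity
      have hB : (x:ℝ) ^ 2 + α ^ 2 ≠ 0 := by positivity
      field_simp
      ring
    rw [heq, MeasureTheory.integral_const_mul,
      integral_sub (aux_integrable_inv_sq_add hz) (aux_integrable_inv_sq_add hα),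
      aux_integral_inv_sq_add hz, aux_integral_inv_sq_add hα]
    field_simp
    ring

/-! ### The complex `λ`-integral -/

lemma aux_denom_ne {α : ℝ} (hα : 0 < α) (x : ℝ) : (α : ℂ) + Complex.I * x ≠ 0 := by
  intro h
  have := congrArg Complex.re h
  simp at this
  exact hα.ne' this

lemma aux_odd_zero {z α : ℝ} (hz : 0 < z) (hα : 0 < α) :
    ∫ x : ℝ, x * ((x ^ 2 + z ^ 2) * (x ^ 2 + α ^ 2))⁻¹ = 0 := by
  have h := integral_neg_eq_self (fun x : ℝ => x * ((x ^ 2 + z ^ 2) * (x ^ 2 + α ^ 2))⁻¹) volume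
  simp only [neg_sq, neg_mul] at h
  rw [integral_neg] at h
  linarith [h]

lemma aux_integral_J {z α : ℝ} (hz : 0 < z) (hα : 0 < α) :
    ∫ x : ℝ, (((x ^ 2 + z ^ 2)⁻¹ : ℝ) : ℂ) * ((α : ℂ) + Complex.I * x)⁻¹
      = ((π / (z * (z + α)) : ℝ) : ℂ) := by
  have hptw : ∀ x : ℝ, (((x ^ 2 + z ^ 2)⁻¹ : ℝ) : ℂ) * ((α : ℂ) + Complex.I * x)⁻¹
      = ((α * ((x ^ 2 + z ^ 2) * (x ^ 2 + α ^ 2))⁻¹ : ℝ) : ℂ)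
        - Complex.I * ((x * ((x ^ 2 + z ^ 2) * (x ^ 2 + α ^ 2))⁻¹ : ℝ) : ℂ) := by
    intro x
    have hA : ((x : ℂ) ^ 2 + (z : ℂ) ^ 2) ≠ 0 := by
      rw [show ((x : ℂ) ^ 2 + (z : ℂ) ^ 2) = ((x ^ 2 + z ^ 2 : ℝ) : ℂ) by push_cast; ring]
      exact_mod_cast (by positivity : (x ^ 2 + z ^ 2 : ℝ) ≠ 0)
    have hB : ((x : ℂ) ^ 2 + (α : ℂ) ^ 2) ≠ 0 := by
      rw [show ((x : ℂ) ^ 2 + (α : ℂ) ^ 2) = ((x ^ 2 + α ^ 2 : ℝ) : ℂ) by push_cast; ring]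
      exact_mod_cast (by positivity : (x ^ 2 + α ^ 2 : ℝ) ≠ 0)
    have hC := aux_denom_ne hα x
    push_cast
    field_simp
    ring_nf
    have hC' : (x : ℂ) * Complex.I + α ≠ 0 := by rwa [add_comm, mul_comm]
    rw [← add_mul, ← div_eq_mul_inv, div_eq_iff hC']
    ring_nf
    simp [Complex.I_sq]
  rw [integral_congr_ae (Filter.Eventually.of_forall hptw)]
  rw [integral_sub (by exact_mod_cast (((aux_integrable_g hz hα).const_mul α).ofReal (𝕜 := ℂ)))
    (by exact ((aux_integrable_xg hz hα).ofReal (𝕜 := ℂ)).const_mul _)]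
  have e1 : ∫ a : ℝ, ((α * ((a ^ 2 + z ^ 2) * (a ^ 2 + α ^ 2))⁻¹ : ℝ) : ℂ)
      = ((∫ a : ℝ, α * ((a ^ 2 + z ^ 2) * (a ^ 2 + α ^ 2))⁻¹ : ℝ) : ℂ) := integral_ofReal (𝕜 := ℂ)
  have e2 : ∫ a : ℝ, ((a * ((a ^ 2 + z ^ 2) * (a ^ 2 + α ^ 2))⁻¹ : ℝ) : ℂ)
      = ((∫ a : ℝ, a * ((a ^ 2 + z ^ 2) * (a ^ 2 + α ^ 2))⁻¹ : ℝ) : ℂ) := integral_ofReal (𝕜 := ℂ)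
  rw [MeasureTheory.integral_const_mul, e1, e2,
    MeasureTheory.integral_const_mul, aux_integral_prod hz hα, aux_odd_zero hz hα]
  have hz' : (z : ℂ) ≠ 0 := by exact_mod_cast hz.ne'
  have hα' : (α : ℂ) ≠ 0 := by exact_mod_cast hα.ne'
  have hzα : (z : ℂ) + (α : ℂ) ≠ 0 := by
    rw [show (z : ℂ) + (α : ℂ) = ((z + α : ℝ) : ℂ) by push_cast; ring]
    exact_mod_cast (by positivity : (z + α : ℝ) ≠ 0)
  push_cast
  rw [mul_zero, sub_zero]
  field_simp

/-! ### The `t`-integral and Fubini -/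

lemma aux_exp_integral {b : ℝ} (hb : 0 < b) :
    ∫ t in Ioi (0 : ℝ), Real.exp (-(b * t)) = b⁻¹ := by
  have h := integral_comp_mul_left_Ioi (fun u : ℝ => Real.exp (-u)) 0 hb
  simp only [mul_zero] at h
  calc ∫ t in Ioi (0:ℝ), Real.exp (-(b * t)) = b⁻¹ • ∫ x in Ioi (0:ℝ), Real.exp (-x) := h
  _ = b⁻¹ := by rw [integral_exp_neg_Ioi]; simp

lemma aux_norm_inv_le {α : ℝ} (hα : 0 < α) (x : ℝ) : ‖((α : ℂ) + Complex.I * x)⁻¹‖ ≤ α⁻¹ := by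
  rw [norm_inv]
  apply inv_anti₀ hα
  calc α = |((α : ℂ) + Complex.I * x).re| := by simp [abs_of_pos hα]
  _ ≤ ‖(α : ℂ) + Complex.I * x‖ := Complex.abs_re_le_norm _

noncomputable def FF (z α : ℝ) (t x : ℝ) : ℂ :=
  ((Real.exp (-((x ^ 2 + z ^ 2) * t)) : ℝ) : ℂ) * ((α : ℂ) + Complex.I * x)⁻¹

lemma aux_norm_FF (z α : ℝ) (t x : ℝ) :
    ‖FF z α t x‖ = Real.exp (-((x ^ 2 + z ^ 2) * t)) * ‖((α : ℂ) + Complex.I * x)⁻¹‖ := by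
  rw [FF, norm_mul, Complex.norm_real, Real.norm_eq_abs, abs_of_pos (Real.exp_pos _)]

lemma aux_cont_FF {z α : ℝ} (hα : 0 < α) :
    Continuous (Function.uncurry (FF z α)) := by
  apply Continuous.mul
  · exact Complex.continuous_ofReal.comp (by fun_prop)
  · apply Continuous.inv₀ (by fun_prop)
    exact fun p => aux_denom_ne hα p.2

lemma aux_FF_slice_integrable {z α : ℝ} (hz : 0 < z) (hα : 0 < α) (x : ℝ) :
    IntegrableOn (fun t => FF z α t x) (Ioi (0 : ℝ)) := by
  have hb : (0:ℝ) < x ^ 2 + z ^ 2 := by positivity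
  apply Integrable.mono' (g := fun t => Real.exp (-((x ^ 2 + z ^ 2) * t)) * α⁻¹)
  · have h0 : IntegrableOn (fun t : ℝ => Real.exp (-((x ^ 2 + z ^ 2) * t))) (Ioi 0) := by
      have := exp_neg_integrableOn_Ioi (0:ℝ) hb
      simpa [neg_mul] using this.congr_fun (fun t _ => by ring_nf) measurableSet_Ioi
    exact h0.mul_const _
  · exact ((aux_cont_FF (z := z) hα).comp
      (by fun_prop : Continuous fun t : ℝ => (t, x))).aestronglyMeasurable.restrict
  · filter_upwards with t
    rw [aux_norm_FF]
    gcongr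
    exact aux_norm_inv_le hα x

lemma aux_FF_integrable_prod {z α : ℝ} (hz : 0 < z) (hα : 0 < α) :
    Integrable (Function.uncurry (FF z α)) ((volume.restrict (Ioi 0)).prod volume) := by
  rw [integrable_prod_iff' (aux_cont_FF (z := z) hα).aestronglyMeasurable]
  constructor
  · filter_upwards with x
    exact aux_FF_slice_integrable hz hα x
  · have heq : (fun x : ℝ => ∫ t in Ioi (0:ℝ), ‖Function.uncurry (FF z α) (t, x)‖)
        = fun x : ℝ => (x ^ 2 + z ^ 2)⁻¹ * ‖((α : ℂ) + Complex.I * x)⁻¹‖ := by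
      funext x
      have hb : (0:ℝ) < x ^ 2 + z ^ 2 := by positivity
      simp only [Function.uncurry]
      simp_rw [aux_norm_FF]
      rw [integral_mul_const, aux_exp_integral hb]
    rw [heq]
    apply Integrable.mono' (g := fun x : ℝ => (x ^ 2 + z ^ 2)⁻¹ * α⁻¹)
    · exact (aux_integrable_inv_sq_add hz).mul_const _
    · apply Continuous.aestronglyMeasurable
      apply Continuous.mul
      · apply Continuous.inv₀ (by fun_prop)
        intro x; positivity
      · apply Continuous.norm
        apply Continuous.inv₀ (by fun_prop)
        exact fun x => aux_denom_ne hα x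
    · filter_upwards with x
      rw [Real.norm_eq_abs, abs_of_nonneg (by positivity)]
      exact mul_le_mul_of_nonneg_left (aux_norm_inv_le hα x) (by positivity)

lemma aux_swap {z α : ℝ} (hz : 0 < z) (hα : 0 < α) :
    ∫ t in Ioi (0:ℝ), ∫ x : ℝ, FF z α t x
      = ((π / (z * (z + α)) : ℝ) : ℂ) := by
  rw [MeasureTheory.integral_integral_swap (aux_FF_integrable_prod hz hα)]
  have heq : ∀ x : ℝ, (∫ t in Ioi (0:ℝ), FF z α t x)
      = (((x ^ 2 + z ^ 2)⁻¹ : ℝ) : ℂ) * ((α : ℂ) + Complex.I * x)⁻¹ := by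
    intro x
    have hb : (0:ℝ) < x ^ 2 + z ^ 2 := by positivity
    rw [show (fun t => FF z α t x) = fun t =>
      ((Real.exp (-((x ^ 2 + z ^ 2) * t)) : ℝ) : ℂ) * ((α : ℂ) + Complex.I * x)⁻¹ from rfl]
    rw [integral_mul_const]
    congr 1
    have e1 : ∫ t in Ioi (0:ℝ), ((Real.exp (-((x ^ 2 + z ^ 2) * t)) : ℝ) : ℂ)
        = ((∫ t in Ioi (0:ℝ), Real.exp (-((x ^ 2 + z ^ 2) * t)) : ℝ) : ℂ) :=
      integral_ofReal (𝕜 := ℂ)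
    rw [e1, aux_exp_integral hb]
  simp_rw [heq]
  exact aux_integral_J hz hα

/-- Lemma 7.2(2): for positive reals `z` and `α`,
`2z ∫₀^∞ e^(−t z²) ∫ℝ e^(−tλ²)/(α + iλ) dλ dt = 2π/(z + α)`, and the same with
`α − iλ` in the denominator. -/
theorem laplace_deriv_cauchy_integral (z α : ℝ) (hz : 0 < z) (hα : 0 < α) :
    (2 * z * ∫ t in Ioi (0 : ℝ), Complex.exp (-(t : ℂ) * z ^ 2) *
        ∫ lam : ℝ, Complex.exp (-(t : ℂ) * lam ^ 2) / ((α : ℂ) + Complex.I * lam)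
      = 2 * π / ((z : ℂ) + α)) ∧
    (2 * z * ∫ t in Ioi (0 : ℝ), Complex.exp (-(t : ℂ) * z ^ 2) *
        ∫ lam : ℝ, Complex.exp (-(t : ℂ) * lam ^ 2) / ((α : ℂ) - Complex.I * lam)
      = 2 * π / ((z : ℂ) + α)) := by
  have hz' : (z : ℂ) ≠ 0 := by exact_mod_cast hz.ne'
  have hzα : (z : ℂ) + (α : ℂ) ≠ 0 := by
    rw [show (z : ℂ) + (α : ℂ) = ((z + α : ℝ) : ℂ) by push_cast; ring]
    exact_mod_cast (by positivity : (z + α : ℝ) ≠ 0)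
  have hInt : EqOn (fun t : ℝ => Complex.exp (-(t : ℂ) * z ^ 2) *
      ∫ lam : ℝ, Complex.exp (-(t : ℂ) * lam ^ 2) / ((α : ℂ) + Complex.I * lam))
      (fun t : ℝ => ∫ x : ℝ, FF z α t x) (Ioi 0) := by
    intro t _
    simp only
    rw [← MeasureTheory.integral_const_mul]
    congr 1
    funext x
    rw [FF, div_eq_mul_inv, ← mul_assoc]
    congr 1
    rw [Complex.ofReal_exp, ← Complex.exp_add]
    congr 1
    push_cast
    ring
  have first : 2 * z * (∫ t in Ioi (0 : ℝ), Complex.exp (-(t : ℂ) * z ^ 2) *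
      ∫ lam : ℝ, Complex.exp (-(t : ℂ) * lam ^ 2) / ((α : ℂ) + Complex.I * lam))
      = 2 * π / ((z : ℂ) + α) := by
    rw [setIntegral_congr_fun measurableSet_Ioi hInt, aux_swap hz hα]
    push_cast
    field_simp
  refine ⟨first, ?_⟩
  have h2 : ∀ t : ℝ, (∫ lam : ℝ, Complex.exp (-(t : ℂ) * lam ^ 2) / ((α : ℂ) - Complex.I * lam))
      = ∫ lam : ℝ, Complex.exp (-(t : ℂ) * lam ^ 2) / ((α : ℂ) + Complex.I * lam) := by
    intro t
    rw [← integral_neg_eq_self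
      (fun x : ℝ => Complex.exp (-(t : ℂ) * x ^ 2) / ((α : ℂ) + Complex.I * x)) volume]
    congr 1
    funext x
    rw [Complex.ofReal_neg]
    ring_nf
  simp_rw [h2]
  exact first
end
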